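/- Let Π ⊂ ℝ₊^{N×N} be a compact convex set, D ∈ ℝ^{N×N}, and H(M) = −Σ_{p,q} M_{pq}(log M_{pq} − 1) with 0 log 0 = 0. For ε > 0 let M_ε be the unique minimizer of M ↦ ⟨M,D⟩_F − εH(M) over Π. Then as ε → 0: (i) the regularized optimal value converges to inf_{M∈Π} ⟨M,D⟩_F, and (ii) M_ε converges to the unique maximizer of H over the set Π₀* of minimizers of ⟨·,D⟩_F on Π. -/

import Mathlib

open Finset

/-- Frobenius inner product of two `N × N` real matrices. -/
noncomputable def frob (N : ℕ) (M D : Matrix (Fin N) (Fin N) ℝ) : ℝ :=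
  ∑ p, ∑ q, M p q * D p q

/-- Entropy of a nonnegative matrix, with the convention `0 log 0 = 0`
(`Real.log 0 = 0`). -/
noncomputable def ent (N : ℕ) (M : Matrix (Fin N) (Fin N) ℝ) : ℝ :=
  -∑ p, ∑ q, M p q * (Real.log (M p q) - 1)

lemma frob_cont (N : ℕ) (D : Matrix (Fin N) (Fin N) ℝ) :
    Continuous (fun M => frob N M D) := by
  unfold frob
  exact continuous_finset_sum _ fun p _ => continuous_finset_sum _ fun q _ =>
    (show Continuous (fun M : Matrix (Fin N) (Fin N) ℝ => M p q) from
      ((continuous_apply q).comp (continuous_apply p))).mul continuous_const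

lemma ent_cont (N : ℕ) : Continuous (ent N) := by
  have h : Continuous (fun x : ℝ => x * (Real.log x - 1)) := by
    have : (fun x : ℝ => x * (Real.log x - 1)) = fun x => x * Real.log x - x := by
      ext x; ring
    rw [this]
    exact Real.continuous_mul_log.sub continuous_id
  unfold ent
  exact (continuous_finset_sum _ fun p _ => continuous_finset_sum _ fun q _ =>
    h.comp ((continuous_apply q).comp (continuous_apply p))).neg

lemma frob_mid (N : ℕ) (A B D : Matrix (Fin N) (Fin N) ℝ) :
    frob N ((1/2 : ℝ) • A + (1/2 : ℝ) • B) D = (frob N A D + frob N B D) / 2 := by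
  unfold frob
  rw [eq_div_iff (by norm_num : (2:ℝ) ≠ 0), ← Finset.sum_add_distrib, Finset.sum_mul]
  refine Finset.sum_congr rfl fun p _ => ?_
  rw [← Finset.sum_add_distrib, Finset.sum_mul]
  refine Finset.sum_congr rfl fun q _ => ?_
  simp only [Matrix.add_apply, Matrix.smul_apply, smul_eq_mul]
  ring

lemma f_mid_le {a b : ℝ} (ha : 0 ≤ a) (hb : 0 ≤ b) :
    ((1/2:ℝ)*a + (1/2:ℝ)*b) * (Real.log ((1/2:ℝ)*a + (1/2:ℝ)*b) - 1)
      ≤ (a * (Real.log a - 1) + b * (Real.log b - 1)) / 2 := by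
  have h := Real.convexOn_mul_log.2 ha hb (by norm_num : (0:ℝ) ≤ 1/2)
    (by norm_num : (0:ℝ) ≤ 1/2) (by norm_num)
  simp only [smul_eq_mul] at h
  nlinarith [h]

lemma f_mid_lt {a b : ℝ} (ha : 0 ≤ a) (hb : 0 ≤ b) (hab : a ≠ b) :
    ((1/2:ℝ)*a + (1/2:ℝ)*b) * (Real.log ((1/2:ℝ)*a + (1/2:ℝ)*b) - 1)
      < (a * (Real.log a - 1) + b * (Real.log b - 1)) / 2 := by
  have h := Real.strictConvexOn_mul_log.2 ha hb hab
    (by norm_num : (0:ℝ) < 1/2) (by norm_num : (0:ℝ) < 1/2) (by norm_num)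
  simp only [smul_eq_mul] at h
  nlinarith [h]

lemma ent_mid_gt (N : ℕ) (A B : Matrix (Fin N) (Fin N) ℝ)
    (hA : ∀ p q, 0 ≤ A p q) (hB : ∀ p q, 0 ≤ B p q) (hAB : A ≠ B) :
    (ent N A + ent N B) / 2 < ent N ((1/2:ℝ) • A + (1/2:ℝ) • B) := by
  obtain ⟨p₀, q₀, hpq⟩ : ∃ p q, A p q ≠ B p q := by
    by_contra h
    push_neg at h
    exact hAB (Matrix.ext h)
  set S : Matrix (Fin N) (Fin N) ℝ → ℝ :=
    fun M => ∑ x : Fin N × Fin N, M x.1 x.2 * (Real.log (M x.1 x.2) - 1) with hSdef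
  have hS : ∀ M, ent N M = -S M := by
    intro M
    unfold ent
    congr 1
    exact (Fintype.sum_prod_type
      (f := fun x : Fin N × Fin N => M x.1 x.2 * (Real.log (M x.1 x.2) - 1))).symm
  have key : S ((1/2:ℝ) • A + (1/2:ℝ) • B)
      < ∑ x : Fin N × Fin N,
        (A x.1 x.2 * (Real.log (A x.1 x.2) - 1) + B x.1 x.2 * (Real.log (B x.1 x.2) - 1)) / 2 := by
    apply Finset.sum_lt_sum
    · intro x _
      have := f_mid_le (hA x.1 x.2) (hB x.1 x.2)
      simp only [hSdef, Matrix.add_apply, Matrix.smul_apply, smul_eq_mul]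
      linarith
    · refine ⟨(p₀, q₀), Finset.mem_univ _, ?_⟩
      have := f_mid_lt (hA p₀ q₀) (hB p₀ q₀) hpq
      simp only [hSdef, Matrix.add_apply, Matrix.smul_apply, smul_eq_mul]
      linarith
  have hsplit : ∑ x : Fin N × Fin N,
      (A x.1 x.2 * (Real.log (A x.1 x.2) - 1) + B x.1 x.2 * (Real.log (B x.1 x.2) - 1)) / 2
      = (S A + S B) / 2 := by
    rw [← Finset.sum_div, Finset.sum_add_distrib]
  rw [hS A, hS B, hS]
  rw [hsplit] at key
  linarith

/-- convergence of the entropic regularization as `ε → 0⁺`: the regularized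
optimal values converge to the unregularized optimal value, and the regularized minimizers
`M_ε` converge to the maximizer of the entropy over the set of minimizers `Π₀*`. -/
theorem entropic_regularization_convergence
    (N : ℕ) (Pi' : Set (Matrix (Fin N) (Fin N) ℝ)) (D : Matrix (Fin N) (Fin N) ℝ)
    (hne : Pi'.Nonempty) (hcomp : IsCompact Pi') (hconv : Convex ℝ Pi')
    (hpos : ∀ M ∈ Pi', ∀ p q, 0 ≤ M p q)
    (Me : ℝ → Matrix (Fin N) (Fin N) ℝ)
    (hMe : ∀ ε : ℝ, 0 < ε → Me ε ∈ Pi' ∧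
      ∀ M ∈ Pi', frob N (Me ε) D - ε * ent N (Me ε) ≤ frob N M D - ε * ent N M)
    (Mstar : Matrix (Fin N) (Fin N) ℝ)
    (hMstar₁ : Mstar ∈ Pi' ∧ ∀ M' ∈ Pi', frob N Mstar D ≤ frob N M' D)
    (hMstar₂ : ∀ M ∈ Pi', (∀ M' ∈ Pi', frob N M D ≤ frob N M' D) →
      ent N M ≤ ent N Mstar) :
    Filter.Tendsto (fun ε => frob N (Me ε) D - ε * ent N (Me ε))
        (nhdsWithin 0 (Set.Ioi 0)) (nhds (sInf {c : ℝ | ∃ M ∈ Pi', c = frob N M D})) ∧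
    Filter.Tendsto Me (nhdsWithin 0 (Set.Ioi 0)) (nhds Mstar) := by
  obtain ⟨hMs_mem, hMs_min⟩ := hMstar₁
  set cstar := frob N Mstar D with hcstar
  have hSinf : sInf {c : ℝ | ∃ M ∈ Pi', c = frob N M D} = cstar := by
    apply le_antisymm
    · exact csInf_le ⟨cstar, fun c ⟨M, hM, hc⟩ => hc ▸ hMs_min M hM⟩ ⟨Mstar, hMs_mem, rfl⟩
    · exact le_csInf ⟨cstar, Mstar, hMs_mem, rfl⟩ (fun c ⟨M, hM, hc⟩ => hc ▸ hMs_min M hM)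
  obtain ⟨C, hC⟩ := hcomp.exists_bound_of_continuousOn (ent_cont N).continuousOn
  have hC' : ∀ M ∈ Pi', |ent N M| ≤ C := by simpa [Real.norm_eq_abs] using hC
  -- basic inequalities for ε > 0
  have h3 : ∀ ε : ℝ, 0 < ε → cstar ≤ frob N (Me ε) D :=
    fun ε hε => hMs_min _ (hMe ε hε).1
  have h1 : ∀ ε : ℝ, 0 < ε → ent N Mstar ≤ ent N (Me ε) := by
    intro ε hε
    have hkey := (hMe ε hε).2 Mstar hMs_mem
    have h3' := h3 ε hε
    nlinarith [hkey, h3']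
  have h2 : ∀ ε : ℝ, 0 < ε → frob N (Me ε) D ≤ cstar + ε * (2 * C) := by
    intro ε hε
    have hkey := (hMe ε hε).2 Mstar hMs_mem
    have hb1 := abs_le.1 (hC' _ (hMe ε hε).1)
    have hb2 := abs_le.1 (hC' _ hMs_mem)
    nlinarith [hkey]
  constructor
  · -- value convergence
    rw [hSinf]
    have hlow : Filter.Tendsto (fun ε : ℝ => cstar - ε * C)
        (nhdsWithin 0 (Set.Ioi 0)) (nhds cstar) := by
      have : Filter.Tendsto (fun ε : ℝ => cstar - ε * C) (nhds 0) (nhds (cstar - 0 * C)) :=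
        (tendsto_const_nhds.sub ((continuous_id.mul continuous_const).tendsto 0))
      simpa using this.mono_left nhdsWithin_le_nhds
    have hup : Filter.Tendsto (fun ε : ℝ => cstar + ε * C)
        (nhdsWithin 0 (Set.Ioi 0)) (nhds cstar) := by
      have : Filter.Tendsto (fun ε : ℝ => cstar + ε * C) (nhds 0) (nhds (cstar + 0 * C)) :=
        (tendsto_const_nhds.add ((continuous_id.mul continuous_const).tendsto 0))
      simpa using this.mono_left nhdsWithin_le_nhds
    refine tendsto_of_tendsto_of_tendsto_of_le_of_le' hlow hup ?_ ?_
    · filter_upwards [self_mem_nhdsWithin] with ε hε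
      have hε' : (0:ℝ) < ε := hε
      have hb1 := abs_le.1 (hC' _ (hMe ε hε').1)
      have h3' := h3 ε hε'
      nlinarith
    · filter_upwards [self_mem_nhdsWithin] with ε hε
      have hε' : (0:ℝ) < ε := hε
      have hkey := (hMe ε hε').2 Mstar hMs_mem
      have hb2 := abs_le.1 (hC' _ hMs_mem)
      nlinarith
  · -- convergence of minimizers
    have huniq : ∀ L ∈ Pi', frob N L D ≤ cstar → ent N Mstar ≤ ent N L → L = Mstar := by
      intro L hL hFL hEL
      by_contra hne'
      have hFLeq : frob N L D = cstar := le_antisymm hFL (hMs_min L hL)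
      have hLmin : ∀ M' ∈ Pi', frob N L D ≤ frob N M' D :=
        fun M' hM' => hFL.trans (hMs_min M' hM')
      have hEL' : ent N L = ent N Mstar := le_antisymm (hMstar₂ L hL hLmin) hEL
      set K := (1/2:ℝ) • L + (1/2:ℝ) • Mstar with hKdef
      have hK : K ∈ Pi' := hconv hL hMs_mem (by norm_num) (by norm_num) (by norm_num)
      have hKF : frob N K D = cstar := by
        rw [hKdef, frob_mid, hFLeq]; ring
      have hKmin : ∀ M' ∈ Pi', frob N K D ≤ frob N M' D := by
        intro M' hM'; rw [hKF]; exact hMs_min M' hM'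
      have hKle := hMstar₂ K hK hKmin
      have hgt := ent_mid_gt N L Mstar (hpos L hL) (hpos Mstar hMs_mem) hne'
      rw [hEL'] at hgt
      linarith
    apply Filter.tendsto_of_subseq_tendsto
    intro ns hns
    have hpos' : ∀ᶠ n in Filter.atTop, ns n ∈ Set.Ioi (0:ℝ) :=
      hns.eventually_mem self_mem_nhdsWithin
    obtain ⟨N₀, hN₀⟩ := Filter.eventually_atTop.mp hpos'
    have hy : ∀ n, Me (ns (n + N₀)) ∈ Pi' :=
      fun n => (hMe _ (hN₀ (n + N₀) (Nat.le_add_left _ _))).1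
    haveI : FirstCountableTopology (Matrix (Fin N) (Fin N) ℝ) :=
      inferInstanceAs (FirstCountableTopology (Fin N → Fin N → ℝ))
    obtain ⟨L, hL, φ, hφ, hcv⟩ := hcomp.tendsto_subseq hy
    refine ⟨fun n => φ n + N₀, ?_⟩
    have hcv' : Filter.Tendsto (fun n => Me (ns (φ n + N₀))) Filter.atTop (nhds L) := hcv
    have hepos : ∀ n, 0 < ns (φ n + N₀) := fun n => hN₀ _ (Nat.le_add_left _ _)
    have hg : Filter.Tendsto (fun n => φ n + N₀) Filter.atTop Filter.atTop :=
      Filter.tendsto_atTop_mono (fun n => le_trans hφ.le_apply (Nat.le_add_right _ _))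
        Filter.tendsto_id
    have he0 : Filter.Tendsto (fun n => ns (φ n + N₀)) Filter.atTop (nhds 0) :=
      (hns.comp hg).mono_right nhdsWithin_le_nhds
    have hfr : Filter.Tendsto (fun n => frob N (Me (ns (φ n + N₀))) D)
        Filter.atTop (nhds (frob N L D)) := ((frob_cont N D).tendsto L).comp hcv'
    have hen : Filter.Tendsto (fun n => ent N (Me (ns (φ n + N₀))))
        Filter.atTop (nhds (ent N L)) := ((ent_cont N).tendsto L).comp hcv'
    have hrhs : Filter.Tendsto (fun n => cstar + ns (φ n + N₀) * (2 * C))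
        Filter.atTop (nhds cstar) := by
      have := (tendsto_const_nhds (x := cstar) (f := Filter.atTop (α := ℕ))).add
        (he0.mul_const (2 * C))
      simpa using this
    have hFL : frob N L D ≤ cstar :=
      le_of_tendsto_of_tendsto' hfr hrhs (fun n => h2 _ (hepos n))
    have hEL : ent N Mstar ≤ ent N L :=
      le_of_tendsto_of_tendsto' tendsto_const_nhds hen (fun n => h1 _ (hepos n))
    have hLM : L = Mstar := huniq L hL hFL hEL
    rw [← hLM]
    exact hcv'
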